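/- Let n ≥ 1. Consider two chords of a chord diagram on 2n points each having exactly one endpoint among the first n positions: say the chords are {a, b} and {c, d} with a, c ∈ {0, …, n−1}, b, d ∈ {n, …, 2n−1}, a ≠ c and b ≠ d. Let ρ be the map that reverses the first n positions and fixes the rest, i.e., ρ(x) = n − 1 − x for x < n and ρ(x) = x for x ≥ n. Then the chords {a, b} and {c, d} interleave if and only if the chords {ρ(a), b} and {ρ(c), d} do not interleave. -/

import Mathlib

/-- Two blocks (chords) of a chord diagram, given as unordered pairs of positions
`p = {p.1, p.2}` and `q = {q.1, q.2}` in `Fin N`, *interleave* if exactly one of the two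
endpoints of `q` lies strictly between the two endpoints of `p` in the natural linear
order on `Fin N`. -/
def Interleave {N : ℕ} (p q : Fin N × Fin N) : Prop :=
  Xor' (min p.1 p.2 < q.1 ∧ q.1 < max p.1 p.2) (min p.1 p.2 < q.2 ∧ q.2 < max p.1 p.2)

/-- The map reversing the order of the first `n` positions of `Fin (2n)` and fixing the
remaining `n` positions: `ρ(x) = n − 1 − x` for `x < n` and `ρ(x) = x` for `x ≥ n`. -/
def reverseFirstHalf (n : ℕ) (x : Fin (2 * n)) : Fin (2 * n) :=
  if h : (x : ℕ) < n then ⟨n - 1 - (x : ℕ), by omega⟩ else x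

/-- **Reversing one side of a bisecting line exchanges crossing and non-crossing chords.**
Let `n ≥ 1` and let `{a, b}` and `{c, d}` be two chords of a chord diagram on `2n` points,
each having exactly one endpoint among the first `n` positions: `a, c < n ≤ b, d`, with
`a ≠ c` and `b ≠ d`. Then `{a, b}` and `{c, d}` interleave if and only if
`{ρ a, b}` and `{ρ c, d}` do not, where `ρ` reverses the first `n` positions. -/
theorem interleave_iff_not_interleave_reverseFirstHalf {n : ℕ} (hn : 1 ≤ n)
    (a b c d : Fin (2 * n)) (ha : (a : ℕ) < n) (hc : (c : ℕ) < n)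
    (hb : n ≤ (b : ℕ)) (hd : n ≤ (d : ℕ)) (hac : a ≠ c) (hbd : b ≠ d) :
    Interleave (a, b) (c, d) ↔
      ¬ Interleave (reverseFirstHalf n a, b) (reverseFirstHalf n c, d) := by
  have hab := b.isLt
  have hdb := d.isLt
  have h1 : (a:ℕ) ≠ c := fun h => hac (Fin.ext h)
  have h2 : (b:ℕ) ≠ d := fun h => hbd (Fin.ext h)
  simp only [Interleave, reverseFirstHalf, dif_pos ha, dif_pos hc, Xor',
    min_def, max_def, Fin.le_def, Fin.lt_def]
  split <;> split <;> simp only [Fin.lt_def, Xor] <;> omega
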